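/- Let p, v be integers with 3 ≤ p ≤ v and let t ≥ 1 be a real number. Define c11 = 2pv(v−1)(2pv³ − 6pv² + 6pv − v³ + 2v − 3), c12 = c13 = −4pv(v−1)(v² − 2v + 2)/(t(p−1)), c21 = tv(p−1)(p²v − pv − p − v), c22 = −(2pv + v − 1), and c23 = −2(pv − 1). Then c11 > 0, c21 > 0, c21·c12 − c11·c22 > 0, and c21·c13 − c11·c23 > 0. -/
import Mathlib

lemma lemA (p v : ℤ) (hp : 3 ≤ p) (hpv : p ≤ v) :
    0 < 2 * p * v ^ 3 - 6 * p * v ^ 2 + 6 * p * v - v ^ 3 + 2 * v - 3 := by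
  nlinarith [mul_nonneg (mul_nonneg (by linarith : (0:ℤ) ≤ p - 3) (by linarith : (0:ℤ) ≤ v)) (by nlinarith : (0:ℤ) ≤ v^2 - 3*v + 3),
    sq_nonneg (v - 3), mul_pos (by linarith : (0:ℤ) < v) (by nlinarith : (0:ℤ) < v^2 - 3*v + 1)]

lemma lemB (p v : ℤ) (hp : 3 ≤ p) (hpv : p ≤ v) :
    0 < p ^ 2 * v - p * v - p - v := by
  have h1 : 5 ≤ p ^ 2 - p - 1 := by nlinarith
  nlinarith [mul_le_mul_of_nonneg_right h1 (show (0:ℤ) ≤ v by linarith)]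

lemma lem3 (p v : ℤ) (hp : 3 ≤ p) (hpv : p ≤ v) :
    2 * v * (v ^ 2 - 2 * v + 2) * (p ^ 2 * v - p * v - p - v) <
      (2 * p * v ^ 3 - 6 * p * v ^ 2 + 6 * p * v - v ^ 3 + 2 * v - 3) * (2 * p * v + v - 1) := by
  nlinarith [mul_nonneg (by linarith : (0:ℤ) ≤ p - 3) (by linarith : (0:ℤ) ≤ v - p),
    sq_nonneg (v - p), sq_nonneg (p - 3), sq_nonneg (v - 3),
    mul_nonneg (mul_nonneg (by linarith : (0:ℤ) ≤ p - 3) (by linarith : (0:ℤ) ≤ v - 3)) (sq_nonneg v),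
    mul_nonneg (mul_nonneg (by linarith : (0:ℤ) ≤ v - p) (by linarith : (0:ℤ) ≤ v - 3)) (mul_nonneg (by linarith : (0:ℤ) ≤ p) (by linarith : (0:ℤ) ≤ v)),
    mul_pos (by linarith : (0:ℤ) < p) (by linarith : (0:ℤ) < v)]

lemma lem4 (p v : ℤ) (hp : 3 ≤ p) (hpv : p ≤ v) :
    v * (v ^ 2 - 2 * v + 2) * (p ^ 2 * v - p * v - p - v) <
      (2 * p * v ^ 3 - 6 * p * v ^ 2 + 6 * p * v - v ^ 3 + 2 * v - 3) * (p * v - 1) := by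
  nlinarith [mul_nonneg (by linarith : (0:ℤ) ≤ p - 3) (by linarith : (0:ℤ) ≤ v - p),
    sq_nonneg (v - p), sq_nonneg (p - 3), sq_nonneg (v - 3),
    mul_nonneg (mul_nonneg (by linarith : (0:ℤ) ≤ p - 3) (by linarith : (0:ℤ) ≤ v - 3)) (sq_nonneg v),
    mul_nonneg (mul_nonneg (by linarith : (0:ℤ) ≤ v - p) (by linarith : (0:ℤ) ≤ v - 3)) (mul_nonneg (by linarith : (0:ℤ) ≤ p) (by linarith : (0:ℤ) ≤ v)),
    mul_pos (by linarith : (0:ℤ) < p) (by linarith : (0:ℤ) < v)]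

/-- Positivity of the constants appearing in the functional `A(x,y)`. -/
theorem functional_constants_positive
    (p v : ℤ) (hp : 3 ≤ p) (hpv : p ≤ v) (t : ℝ) (ht : 1 ≤ t)
    (c11 c12 c13 c21 c22 c23 : ℝ)
    (hc11 : c11 = 2 * p * v * (v - 1) *
      (2 * p * v ^ 3 - 6 * p * v ^ 2 + 6 * p * v - v ^ 3 + 2 * v - 3))
    (hc12 : c12 = -4 * p * v * (v - 1) * (v ^ 2 - 2 * v + 2) / (t * (p - 1)))
    (hc13 : c13 = c12)
    (hc21 : c21 = t * v * (p - 1) * (p ^ 2 * v - p * v - p - v))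
    (hc22 : c22 = -(2 * p * v + v - 1))
    (hc23 : c23 = -2 * (p * v - 1)) :
    c11 > 0 ∧ c21 > 0 ∧ c21 * c12 - c11 * c22 > 0 ∧
      c21 * c13 - c11 * c23 > 0 := by
  have hp' : (3:ℝ) ≤ (p:ℝ) := by exact_mod_cast hp
  have hv' : (p:ℝ) ≤ (v:ℝ) := by exact_mod_cast hpv
  have ht0 : (0:ℝ) < t := by linarith
  have hp1 : (0:ℝ) < (p:ℝ) - 1 := by linarith
  have hP : (0:ℝ) < (p:ℝ) := by linarith
  have hV : (0:ℝ) < (v:ℝ) := by linarith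
  have hv1 : (0:ℝ) < (v:ℝ) - 1 := by linarith
  have hne : t * ((p:ℝ) - 1) ≠ 0 := by positivity
  have hA : (0:ℝ) < 2 * (p:ℝ) * (v:ℝ) ^ 3 - 6 * p * v ^ 2 + 6 * p * v - v ^ 3 + 2 * v - 3 := by
    exact_mod_cast lemA p v hp hpv
  have hB : (0:ℝ) < (p:ℝ) ^ 2 * (v:ℝ) - p * v - p - v := by
    exact_mod_cast lemB p v hp hpv
  have h3 : (0:ℝ) < (2 * (p:ℝ) * (v:ℝ) ^ 3 - 6 * p * v ^ 2 + 6 * p * v - v ^ 3 + 2 * v - 3) *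
      (2 * p * v + v - 1) - 2 * v * (v ^ 2 - 2 * v + 2) * (p ^ 2 * v - p * v - p - v) := by
    have := lem3 p v hp hpv
    have h : ((2 * v * (v ^ 2 - 2 * v + 2) * (p ^ 2 * v - p * v - p - v) : ℤ) : ℝ) <
        (((2 * p * v ^ 3 - 6 * p * v ^ 2 + 6 * p * v - v ^ 3 + 2 * v - 3) * (2 * p * v + v - 1) : ℤ) : ℝ) := by
      exact_mod_cast this
    push_cast at h
    linarith
  have h4 : (0:ℝ) < (2 * (p:ℝ) * (v:ℝ) ^ 3 - 6 * p * v ^ 2 + 6 * p * v - v ^ 3 + 2 * v - 3) *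
      (p * v - 1) - v * (v ^ 2 - 2 * v + 2) * (p ^ 2 * v - p * v - p - v) := by
    have := lem4 p v hp hpv
    have h : ((v * (v ^ 2 - 2 * v + 2) * (p ^ 2 * v - p * v - p - v) : ℤ) : ℝ) <
        (((2 * p * v ^ 3 - 6 * p * v ^ 2 + 6 * p * v - v ^ 3 + 2 * v - 3) * (p * v - 1) : ℤ) : ℝ) := by
      exact_mod_cast this
    push_cast at h
    linarith
  refine ⟨?_, ?_, ?_, ?_⟩
  · rw [hc11]
    exact mul_pos (mul_pos (mul_pos (mul_pos two_pos hP) hV) hv1) hA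
  · rw [hc21]
    exact mul_pos (mul_pos (mul_pos ht0 hV) hp1) hB
  · have key : c21 * c12 - c11 * c22 = 2 * (p:ℝ) * v * (v - 1) *
        ((2 * (p:ℝ) * (v:ℝ) ^ 3 - 6 * p * v ^ 2 + 6 * p * v - v ^ 3 + 2 * v - 3) *
          (2 * p * v + v - 1) - 2 * v * (v ^ 2 - 2 * v + 2) * (p ^ 2 * v - p * v - p - v)) := by
      rw [hc21, hc12, hc11, hc22]
      field_simp
      ring
    rw [key]
    exact mul_pos (mul_pos (mul_pos (mul_pos two_pos hP) hV) hv1) h3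
  · have key : c21 * c13 - c11 * c23 = 4 * (p:ℝ) * v * (v - 1) *
        ((2 * (p:ℝ) * (v:ℝ) ^ 3 - 6 * p * v ^ 2 + 6 * p * v - v ^ 3 + 2 * v - 3) *
          (p * v - 1) - v * (v ^ 2 - 2 * v + 2) * (p ^ 2 * v - p * v - p - v)) := by
      rw [hc21, hc13, hc12, hc11, hc23]
      field_simp
      ring
    rw [key]
    exact mul_pos (mul_pos (mul_pos (mul_pos four_pos hP) hV) hv1) h4
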